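/- Let C_a, C_t, N_a, s be positive reals and J ≥ 2 a natural number. Suppose C_a < C_t and 0 < x < (C_a/C_t)^{1/(2(J−1))}, and set l̃ = (J+1)/2 + log(C_a/C_t)/(4·log x). Then (J+1)/2 < l̃ < J, and for every integer l with 1 ≤ l ≤ J one has γ_x(l) ≤ max(γ_x(⌊l̃⌋), γ_x(⌈l̃⌉)) (Proposition 1, Case I, first subcase). -/

import Mathlib

open Real

/-- Received SNR in the multi-IRS WIT system, as a function of the AIRS index `l`:
`γ_x(l) = C_a·C_t·N_a·x^{2(J−1)} / (s·C_a·x^{2(J−l)} + s·C_t·x^{2(l−1)} + s²)`. -/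
noncomputable def snr (Ca Ct Na s : ℝ) (J : ℕ) (x l : ℝ) : ℝ :=
  Ca * Ct * Na * x ^ (2 * ((J : ℝ) - 1)) /
    (s * Ca * x ^ (2 * ((J : ℝ) - l)) + s * Ct * x ^ (2 * (l - 1)) + s ^ 2)

private lemma denom_pos (Ca Ct s : ℝ) (hCa : 0 < Ca) (hCt : 0 < Ct) (hs : 0 < s)
    (J : ℕ) (x : ℝ) (hx0 : 0 < x) (l : ℝ) :
    0 < s * Ca * x ^ (2 * ((J : ℝ) - l)) + s * Ct * x ^ (2 * (l - 1)) + s ^ 2 := by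
  have h1 := Real.rpow_pos_of_pos hx0 (2 * ((J : ℝ) - l))
  have h2 := Real.rpow_pos_of_pos hx0 (2 * (l - 1))
  positivity

private lemma exp_cond (A B x p q : ℝ) (hA : 0 < A) (hB : 0 < B) (hx0 : 0 < x)
    (h : Real.log A + Real.log x * p ≤ Real.log B + Real.log x * q) :
    A * x ^ p ≤ B * x ^ q := by
  rw [Real.rpow_def_of_pos hx0, Real.rpow_def_of_pos hx0, ← Real.exp_log hA,
    ← Real.exp_log hB, ← Real.exp_add, ← Real.exp_add]
  exact Real.exp_le_exp.mpr h

/-- decreasing branch: if `a ≤ b` and the midpoint is left of the minimizer `l̃`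
(encoded as `Ca·x^(2J+2) ≤ Ct·x^(2a+2b)`), then `D b ≤ D a`. -/
private lemma denom_le (Ca Ct s : ℝ) (hCa : 0 < Ca) (hCt : 0 < Ct) (hs : 0 < s)
    (J : ℕ) (x : ℝ) (hx0 : 0 < x) (hx1 : x < 1) (a b : ℝ) (hab : a ≤ b)
    (hcond : Ca * x ^ (2 * (J : ℝ) + 2) ≤ Ct * x ^ (2 * a + 2 * b)) :
    s * Ca * x ^ (2 * ((J : ℝ) - b)) + s * Ct * x ^ (2 * (b - 1)) + s ^ 2 ≤
    s * Ca * x ^ (2 * ((J : ℝ) - a)) + s * Ct * x ^ (2 * (a - 1)) + s ^ 2 := by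
  have hu : (0:ℝ) < x ^ (2 * a) := Real.rpow_pos_of_pos hx0 _
  have hv : (0:ℝ) < x ^ (2 * b) := Real.rpow_pos_of_pos hx0 _
  have hy : (0:ℝ) < x ^ ((2:ℝ)) := Real.rpow_pos_of_pos hx0 _
  have hw : (0:ℝ) < x ^ (2 * (J:ℝ)) := Real.rpow_pos_of_pos hx0 _
  have ha1 : x ^ (2 * ((J:ℝ) - a)) = x ^ (2 * (J:ℝ)) / x ^ (2 * a) := by
    rw [← Real.rpow_sub hx0]; congr 1; ring
  have ha2 : x ^ (2 * (a - 1)) = x ^ (2 * a) / x ^ ((2:ℝ)) := by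
    rw [← Real.rpow_sub hx0]; congr 1; ring
  have hb1 : x ^ (2 * ((J:ℝ) - b)) = x ^ (2 * (J:ℝ)) / x ^ (2 * b) := by
    rw [← Real.rpow_sub hx0]; congr 1; ring
  have hb2 : x ^ (2 * (b - 1)) = x ^ (2 * b) / x ^ ((2:ℝ)) := by
    rw [← Real.rpow_sub hx0]; congr 1; ring
  have huv : x ^ (2 * b) ≤ x ^ (2 * a) :=
    Real.rpow_le_rpow_of_exponent_ge hx0 hx1.le (by linarith)
  have hwy : x ^ (2 * (J:ℝ)) * x ^ ((2:ℝ)) = x ^ (2 * (J:ℝ) + 2) := by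
    rw [← Real.rpow_add hx0]
  have huv2 : x ^ (2 * a) * x ^ (2 * b) = x ^ (2 * a + 2 * b) := by
    rw [← Real.rpow_add hx0]
  have hcond' : Ca * (x ^ (2 * (J:ℝ)) * x ^ ((2:ℝ))) ≤ Ct * (x ^ (2 * a) * x ^ (2 * b)) := by
    rw [hwy, huv2]; exact hcond
  rw [ha1, ha2, hb1, hb2]
  have key : (s * Ca * (x ^ (2 * (J:ℝ)) / x ^ (2 * a)) + s * Ct * (x ^ (2 * a) / x ^ ((2:ℝ))) + s ^ 2)
      - (s * Ca * (x ^ (2 * (J:ℝ)) / x ^ (2 * b)) + s * Ct * (x ^ (2 * b) / x ^ ((2:ℝ))) + s ^ 2)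
      = (x ^ (2 * a) - x ^ (2 * b)) *
        (s * Ct * (x ^ (2 * a) * x ^ (2 * b)) - s * Ca * (x ^ (2 * (J:ℝ)) * x ^ ((2:ℝ))))
        / (x ^ (2 * a) * x ^ (2 * b) * x ^ ((2:ℝ))) := by
    field_simp
    ring
  have hbr : 0 ≤ s * Ct * (x ^ (2 * a) * x ^ (2 * b)) - s * Ca * (x ^ (2 * (J:ℝ)) * x ^ ((2:ℝ))) := by
    nlinarith [hcond', hs.le]
  have hnum : 0 ≤ (x ^ (2 * a) - x ^ (2 * b)) *
      (s * Ct * (x ^ (2 * a) * x ^ (2 * b)) - s * Ca * (x ^ (2 * (J:ℝ)) * x ^ ((2:ℝ)))) :=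
    mul_nonneg (by linarith) hbr
  have : 0 ≤ (x ^ (2 * a) - x ^ (2 * b)) *
      (s * Ct * (x ^ (2 * a) * x ^ (2 * b)) - s * Ca * (x ^ (2 * (J:ℝ)) * x ^ ((2:ℝ))))
      / (x ^ (2 * a) * x ^ (2 * b) * x ^ ((2:ℝ))) :=
    div_nonneg hnum (by positivity)
  linarith [key, this]

/-- increasing branch. -/
private lemma denom_le' (Ca Ct s : ℝ) (hCa : 0 < Ca) (hCt : 0 < Ct) (hs : 0 < s)
    (J : ℕ) (x : ℝ) (hx0 : 0 < x) (hx1 : x < 1) (a b : ℝ) (hab : a ≤ b)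
    (hcond : Ct * x ^ (2 * a + 2 * b) ≤ Ca * x ^ (2 * (J : ℝ) + 2)) :
    s * Ca * x ^ (2 * ((J : ℝ) - a)) + s * Ct * x ^ (2 * (a - 1)) + s ^ 2 ≤
    s * Ca * x ^ (2 * ((J : ℝ) - b)) + s * Ct * x ^ (2 * (b - 1)) + s ^ 2 := by
  have hu : (0:ℝ) < x ^ (2 * a) := Real.rpow_pos_of_pos hx0 _
  have hv : (0:ℝ) < x ^ (2 * b) := Real.rpow_pos_of_pos hx0 _
  have hy : (0:ℝ) < x ^ ((2:ℝ)) := Real.rpow_pos_of_pos hx0 _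
  have hw : (0:ℝ) < x ^ (2 * (J:ℝ)) := Real.rpow_pos_of_pos hx0 _
  have ha1 : x ^ (2 * ((J:ℝ) - a)) = x ^ (2 * (J:ℝ)) / x ^ (2 * a) := by
    rw [← Real.rpow_sub hx0]; congr 1; ring
  have ha2 : x ^ (2 * (a - 1)) = x ^ (2 * a) / x ^ ((2:ℝ)) := by
    rw [← Real.rpow_sub hx0]; congr 1; ring
  have hb1 : x ^ (2 * ((J:ℝ) - b)) = x ^ (2 * (J:ℝ)) / x ^ (2 * b) := by
    rw [← Real.rpow_sub hx0]; congr 1; ring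
  have hb2 : x ^ (2 * (b - 1)) = x ^ (2 * b) / x ^ ((2:ℝ)) := by
    rw [← Real.rpow_sub hx0]; congr 1; ring
  have huv : x ^ (2 * b) ≤ x ^ (2 * a) :=
    Real.rpow_le_rpow_of_exponent_ge hx0 hx1.le (by linarith)
  have hwy : x ^ (2 * (J:ℝ)) * x ^ ((2:ℝ)) = x ^ (2 * (J:ℝ) + 2) := by
    rw [← Real.rpow_add hx0]
  have huv2 : x ^ (2 * a) * x ^ (2 * b) = x ^ (2 * a + 2 * b) := by
    rw [← Real.rpow_add hx0]
  have hcond' : Ct * (x ^ (2 * a) * x ^ (2 * b)) ≤ Ca * (x ^ (2 * (J:ℝ)) * x ^ ((2:ℝ))) := by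
    rw [hwy, huv2]; exact hcond
  rw [ha1, ha2, hb1, hb2]
  have key : (s * Ca * (x ^ (2 * (J:ℝ)) / x ^ (2 * b)) + s * Ct * (x ^ (2 * b) / x ^ ((2:ℝ))) + s ^ 2)
      - (s * Ca * (x ^ (2 * (J:ℝ)) / x ^ (2 * a)) + s * Ct * (x ^ (2 * a) / x ^ ((2:ℝ))) + s ^ 2)
      = (x ^ (2 * a) - x ^ (2 * b)) *
        (s * Ca * (x ^ (2 * (J:ℝ)) * x ^ ((2:ℝ))) - s * Ct * (x ^ (2 * a) * x ^ (2 * b)))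
        / (x ^ (2 * a) * x ^ (2 * b) * x ^ ((2:ℝ))) := by
    field_simp
    ring
  have hbr : 0 ≤ s * Ca * (x ^ (2 * (J:ℝ)) * x ^ ((2:ℝ))) - s * Ct * (x ^ (2 * a) * x ^ (2 * b)) := by
    nlinarith [hcond', hs.le]
  have hnum : 0 ≤ (x ^ (2 * a) - x ^ (2 * b)) *
      (s * Ca * (x ^ (2 * (J:ℝ)) * x ^ ((2:ℝ))) - s * Ct * (x ^ (2 * a) * x ^ (2 * b))) :=
    mul_nonneg (by linarith) hbr
  have : 0 ≤ (x ^ (2 * a) - x ^ (2 * b)) *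
      (s * Ca * (x ^ (2 * (J:ℝ)) * x ^ ((2:ℝ))) - s * Ct * (x ^ (2 * a) * x ^ (2 * b)))
      / (x ^ (2 * a) * x ^ (2 * b) * x ^ ((2:ℝ))) :=
    div_nonneg hnum (by positivity)
  linarith [key, this]

/-- Proposition 1, Case I, first subcase: if `C_a < C_t` and
`0 < x < (C_a/C_t)^{1/(2(J−1))}`, then `l̃ = (J+1)/2 + log(C_a/C_t)/(4·log x)` satisfies
`(J+1)/2 < l̃ < J`, and the received SNR at any integer AIRS location `1 ≤ l ≤ J` is at most
the larger of the SNRs at `⌊l̃⌋` and `⌈l̃⌉`. -/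
theorem stmt_4 (Ca Ct Na s : ℝ) (hCa : 0 < Ca) (hCt : 0 < Ct) (hNa : 0 < Na) (hs : 0 < s)
    (J : ℕ) (hJ : 2 ≤ J) (x : ℝ)
    (hCaCt : Ca < Ct)
    (hx0 : 0 < x) (hxub : x < (Ca / Ct) ^ (1 / (2 * ((J : ℝ) - 1)))) :
    (((J : ℝ) + 1) / 2 < ((J : ℝ) + 1) / 2 + Real.log (Ca / Ct) / (4 * Real.log x)) ∧
    (((J : ℝ) + 1) / 2 + Real.log (Ca / Ct) / (4 * Real.log x) < (J : ℝ)) ∧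
    ∀ l : ℤ, 1 ≤ l → l ≤ (J : ℤ) →
      snr Ca Ct Na s J x (l : ℝ) ≤
        max (snr Ca Ct Na s J x ((⌊((J : ℝ) + 1) / 2 + Real.log (Ca / Ct) / (4 * Real.log x)⌋ : ℤ) : ℝ))
            (snr Ca Ct Na s J x ((⌈((J : ℝ) + 1) / 2 + Real.log (Ca / Ct) / (4 * Real.log x)⌉ : ℤ) : ℝ)) := by
  have hJ2 : (2:ℝ) ≤ (J:ℝ) := by exact_mod_cast hJ
  have hratio0 : 0 < Ca / Ct := by positivity
  have hratio1 : Ca / Ct < 1 := (div_lt_one hCt).mpr hCaCt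
  have hexp : 0 < 1 / (2 * ((J:ℝ) - 1)) := by
    apply div_pos one_pos; linarith
  have hx1 : x < 1 :=
    lt_trans hxub (Real.rpow_lt_one hratio0.le hratio1 hexp)
  have hL : Real.log x < 0 := Real.log_neg hx0 hx1
  have h4L : 4 * Real.log x < 0 := by linarith
  have hLne : Real.log x ≠ 0 := ne_of_lt hL
  have hcneg : Real.log Ca - Real.log Ct < 0 :=
    sub_neg.mpr (Real.log_lt_log hCa hCaCt)
  have hlogdiv : Real.log (Ca / Ct) = Real.log Ca - Real.log Ct :=
    Real.log_div hCa.ne' hCt.ne'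
  -- key inequality: 2(J-1) log x < log Ca - log Ct
  have hkey : 2 * ((J:ℝ) - 1) * Real.log x < Real.log Ca - Real.log Ct := by
    have h1 : Real.log x < Real.log ((Ca / Ct) ^ (1 / (2 * ((J:ℝ) - 1)))) :=
      Real.log_lt_log hx0 hxub
    rw [Real.log_rpow hratio0, hlogdiv] at h1
    have hne : 2 * ((J:ℝ) - 1) ≠ 0 := by intro h; nlinarith
    have h2 : 2 * ((J:ℝ) - 1) * (1 / (2 * ((J:ℝ) - 1)) * (Real.log Ca - Real.log Ct))
        = Real.log Ca - Real.log Ct := by field_simp; exact mul_div_cancel_left₀ _ (by linarith)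
    nlinarith [mul_lt_mul_of_pos_left h1 (show (0:ℝ) < 2 * ((J:ℝ) - 1) by linarith)]
  rw [hlogdiv]
  set q : ℝ := (Real.log Ca - Real.log Ct) / (4 * Real.log x) with hq
  have hqmul : q * (4 * Real.log x) = Real.log Ca - Real.log Ct :=
    div_mul_cancel₀ _ (by linarith : (4:ℝ) * Real.log x ≠ 0)
  have hqpos : 0 < q := div_pos_of_neg_of_neg hcneg h4L
  have hqlt : q < ((J:ℝ) - 1) / 2 := by
    rw [hq, div_lt_iff_of_neg h4L]; nlinarith
  refine ⟨by linarith, by linarith, ?_⟩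
  set lt : ℝ := ((J:ℝ) + 1) / 2 + q with hltdef
  have hltmul : lt * (4 * Real.log x)
      = ((J:ℝ) + 1) * (2 * Real.log x) + (Real.log Ca - Real.log Ct) := by
    rw [hltdef]; nlinarith [hqmul]
  clear_value q lt
  intro l hl1 hlJ
  have hFle : ((⌊lt⌋ : ℤ) : ℝ) ≤ lt := Int.floor_le lt
  have hCge : lt ≤ ((⌈lt⌉ : ℤ) : ℝ) := Int.le_ceil lt
  rcases le_or_gt l ⌊lt⌋ with hcase | hcase
  · -- l ≤ ⌊lt⌋ : decreasing branch
    have hlF : ((l:ℝ)) ≤ ((⌊lt⌋ : ℤ) : ℝ) := by exact_mod_cast hcase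
    have havg : ((l:ℝ) + ((⌊lt⌋ : ℤ) : ℝ)) / 2 ≤ lt := by linarith
    have hmul : lt * (4 * Real.log x) ≤ (((l:ℝ) + ((⌊lt⌋ : ℤ) : ℝ)) / 2) * (4 * Real.log x) :=
      mul_le_mul_of_nonpos_right havg h4L.le
    have hlog : Real.log Ca + Real.log x * (2 * (J:ℝ) + 2)
        ≤ Real.log Ct + Real.log x * (2 * (l:ℝ) + 2 * ((⌊lt⌋ : ℤ) : ℝ)) := by
      linarith [hmul, hltmul]
    have hcond := exp_cond Ca Ct x (2 * (J:ℝ) + 2) (2 * (l:ℝ) + 2 * ((⌊lt⌋ : ℤ) : ℝ))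
      hCa hCt hx0 hlog
    have hD := denom_le Ca Ct s hCa hCt hs J x hx0 hx1 (l:ℝ) ((⌊lt⌋ : ℤ) : ℝ) hlF hcond
    refine le_trans ?_ (le_max_left _ _)
    unfold snr
    gcongr
  · -- ⌈lt⌉ ≤ l : increasing branch
    have hCl : ⌈lt⌉ ≤ l := le_trans (Int.ceil_le_floor_add_one lt) (by omega)
    have hCl' : ((⌈lt⌉ : ℤ) : ℝ) ≤ (l:ℝ) := by exact_mod_cast hCl
    have havg : lt ≤ (((⌈lt⌉ : ℤ) : ℝ) + (l:ℝ)) / 2 := by linarith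
    have hmul : ((((⌈lt⌉ : ℤ) : ℝ) + (l:ℝ)) / 2) * (4 * Real.log x) ≤ lt * (4 * Real.log x) :=
      mul_le_mul_of_nonpos_right havg h4L.le
    have hlog : Real.log Ct + Real.log x * (2 * ((⌈lt⌉ : ℤ) : ℝ) + 2 * (l:ℝ))
        ≤ Real.log Ca + Real.log x * (2 * (J:ℝ) + 2) := by
      linarith [hmul, hltmul]
    have hcond := exp_cond Ct Ca x (2 * ((⌈lt⌉ : ℤ) : ℝ) + 2 * (l:ℝ)) (2 * (J:ℝ) + 2)
      hCt hCa hx0 hlog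
    have hD := denom_le' Ca Ct s hCa hCt hs J x hx0 hx1 ((⌈lt⌉ : ℤ) : ℝ) (l:ℝ) hCl' hcond
    refine le_trans ?_ (le_max_right _ _)
    unfold snr
    gcongr
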